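/- arXiv:2405.20848 — 3 statements merged into one kernel-verified Lean document; each statement's English description precedes it below -/
import Mathlib

section
/- For any finite family of sets, the function C(s) = log(|⋃_{r∈s} X_r| + c) with constant c ≥ 1 is a monotone submodular set function on subsets s of the index set. -/
lemma log_diff_anti {a b d : ℝ} (ha : 0 < a) (hab : a ≤ b) (hd : 0 ≤ d) :
    Real.log (b + d) - Real.log b ≤ Real.log (a + d) - Real.log a := by
  have hb : 0 < b := lt_of_lt_of_le ha hab
  have h1 : Real.log ((b + d) * a) ≤ Real.log ((a + d) * b) := by
    apply Real.log_le_log (by positivity)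
    nlinarith
  rw [Real.log_mul (by positivity) (by positivity),
      Real.log_mul (by positivity) (by positivity)] at h1
  linarith

lemma card_union_sdiff {α : Type*} [DecidableEq α] (A B : Finset α) :
    (A ∪ B).card = B.card + (A \ B).card := by
  rw [add_comm]; exact (Finset.card_sdiff_add_card A B).symm

/-- C(s) = log(|⋃_{r∈s} X_r| + c) with c ≥ 1 is monotone and submodular. -/
theorem log_coverage_monotone_submodular {ρ α : Type*} [DecidableEq ρ] [DecidableEq α]
    (X : ρ → Finset α) (c : ℝ) (hc : 1 ≤ c) :
    (∀ s t : Finset ρ, s ⊆ t →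
      Real.log ((s.biUnion X).card + c) ≤ Real.log ((t.biUnion X).card + c)) ∧
    (∀ (s t : Finset ρ), s ⊆ t → ∀ r : ρ,
      Real.log (((insert r t).biUnion X).card + c) - Real.log ((t.biUnion X).card + c) ≤
        Real.log (((insert r s).biUnion X).card + c) - Real.log ((s.biUnion X).card + c)) := by
  constructor
  · intro s t hst
    apply Real.log_le_log (by positivity)
    have := Finset.card_le_card (Finset.biUnion_subset_biUnion_of_subset_left X hst)
    have : ((s.biUnion X).card : ℝ) ≤ (t.biUnion X).card := by exact_mod_cast this
    linarith
  · intro s t hst r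
    have hins : ∀ u : Finset ρ, (insert r u).biUnion X = X r ∪ u.biUnion X := by
      intro u; rw [Finset.biUnion_insert]
    rw [hins s, hins t, card_union_sdiff, card_union_sdiff]
    have hST := Finset.card_le_card (Finset.biUnion_subset_biUnion_of_subset_left X hst)
    have hd : (X r \ t.biUnion X).card ≤ (X r \ s.biUnion X).card :=
      Finset.card_le_card (Finset.sdiff_subset_sdiff le_rfl
        (Finset.biUnion_subset_biUnion_of_subset_left X hst))
    set a : ℝ := (s.biUnion X).card + c with ha_def
    set b : ℝ := (t.biUnion X).card + c with hb_def
    have ha : 0 < a := by positivity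
    have hab : a ≤ b := by
      have : ((s.biUnion X).card : ℝ) ≤ (t.biUnion X).card := by exact_mod_cast hST
      simp only [ha_def, hb_def]; linarith
    have hb : 0 < b := lt_of_lt_of_le ha hab
    have hdd : ((X r \ t.biUnion X).card : ℝ) ≤ (X r \ s.biUnion X).card := by exact_mod_cast hd
    calc Real.log (((t.biUnion X).card + (X r \ t.biUnion X).card : ℕ) + c) - Real.log b
        = Real.log (b + (X r \ t.biUnion X).card) - Real.log b := by
          push_cast; rw [hb_def]; ring_nf
      _ ≤ Real.log (b + (X r \ s.biUnion X).card) - Real.log b := by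
          gcongr
      _ ≤ Real.log (a + (X r \ s.biUnion X).card) - Real.log a :=
          log_diff_anti ha hab (by positivity)
      _ = Real.log (((s.biUnion X).card + (X r \ s.biUnion X).card : ℕ) + c) - Real.log a := by
          push_cast; rw [ha_def]; ring_nf
end

section
/- For a supermodular set function f on a finite ground set Γ and any reference set r⁽ᵗ⁾ ⊆ Γ, the expression L¹(r) = f(r⁽ᵗ⁾) − Σ_{j∈r⁽ᵗ⁾∖r} f(j | r⁽ᵗ⁾∖{j}) + Σ_{j∈r∖r⁽ᵗ⁾} f(j | ∅) satisfies L¹(r) ≤ f(r) for all r ⊆ Γ, with equality when r = r⁽ᵗ⁾. -/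
private lemma sup_lem1 {ι : Type*} [DecidableEq ι] (f : Finset ι → ℝ)
    (hsup : ∀ (s t : Finset ι), s ⊆ t → ∀ j : ι,
      f (insert j s) - f s ≤ f (insert j t) - f t) :
    ∀ n (t s : Finset ι), s ⊆ t → (t \ s).card = n →
      f t - f s ≤ ∑ j ∈ t \ s, (f t - f (t.erase j)) := by
  intro n
  induction n with
  | zero =>
    intro t s hst hcard
    have : t \ s = ∅ := Finset.card_eq_zero.mp hcard
    have hts : t = s := Finset.Subset.antisymm
      (fun x hx => by
        by_contra hxs
        exact absurd (Finset.mem_sdiff.mpr ⟨hx, hxs⟩) (by simp [this])) hst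
    simp [hts, this]
  | succ n ih =>
    intro t s hst hcard
    obtain ⟨j, hj⟩ := Finset.card_pos.mp (by omega : 0 < (t \ s).card)
    obtain ⟨hjt, hjs⟩ := Finset.mem_sdiff.mp hj
    have hsub : s ⊆ t.erase j := fun x hx =>
      Finset.mem_erase.mpr ⟨fun h => hjs (h ▸ hx), hst hx⟩
    have hdiff : t.erase j \ s = (t \ s).erase j := by
      ext x; simp [Finset.mem_erase, Finset.mem_sdiff]; tauto
    have hcard' : (t.erase j \ s).card = n := by
      rw [hdiff, Finset.card_erase_of_mem hj, hcard]
      omega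
    have h1 := ih (t.erase j) s hsub hcard'
    have h2 : ∑ x ∈ t.erase j \ s, (f (t.erase j) - f ((t.erase j).erase x))
        ≤ ∑ x ∈ t.erase j \ s, (f t - f (t.erase x)) := by
      apply Finset.sum_le_sum
      intro x hx
      obtain ⟨hxj, hxt, hxs⟩ : x ≠ j ∧ x ∈ t ∧ x ∉ s := by
        rw [hdiff] at hx
        simp [Finset.mem_erase, Finset.mem_sdiff] at hx; tauto
      have hss : (t.erase j).erase x ⊆ t.erase x := fun y hy => by
        simp [Finset.mem_erase] at hy ⊢; tauto
      have := hsup ((t.erase j).erase x) (t.erase x) hss x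
      rwa [Finset.insert_erase (Finset.mem_erase.mpr ⟨hxj, hxt⟩),
        Finset.insert_erase hxt] at this
    have hstep : f t - f s =
        (f t - f (t.erase j)) + (f (t.erase j) - f s) := by ring
    rw [hstep]
    calc (f t - f (t.erase j)) + (f (t.erase j) - f s)
        ≤ (f t - f (t.erase j)) + ∑ x ∈ t.erase j \ s, (f t - f (t.erase x)) := by
          linarith [le_trans h1 h2]
      _ = ∑ x ∈ t \ s, (f t - f (t.erase x)) := by
          rw [hdiff, ← Finset.sum_erase_add (t \ s) _ hj]; ring

private lemma sup_lem2 {ι : Type*} [DecidableEq ι] (f : Finset ι → ℝ)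
    (hsup : ∀ (s t : Finset ι), s ⊆ t → ∀ j : ι,
      f (insert j s) - f s ≤ f (insert j t) - f t) :
    ∀ n (t s : Finset ι), s ⊆ t → (t \ s).card = n →
      ∑ j ∈ t \ s, (f {j} - f ∅) ≤ f t - f s := by
  intro n
  induction n with
  | zero =>
    intro t s hst hcard
    have h0 : t \ s = ∅ := Finset.card_eq_zero.mp hcard
    have hts : t = s := Finset.Subset.antisymm
      (fun x hx => by
        by_contra hxs
        exact absurd (Finset.mem_sdiff.mpr ⟨hx, hxs⟩) (by simp [h0])) hst
    simp [hts, h0]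
  | succ n ih =>
    intro t s hst hcard
    obtain ⟨j, hj⟩ := Finset.card_pos.mp (by omega : 0 < (t \ s).card)
    obtain ⟨hjt, hjs⟩ := Finset.mem_sdiff.mp hj
    have hsub : s ⊆ t.erase j := fun x hx =>
      Finset.mem_erase.mpr ⟨fun h => hjs (h ▸ hx), hst hx⟩
    have hdiff : t.erase j \ s = (t \ s).erase j := by
      ext x; simp [Finset.mem_erase, Finset.mem_sdiff]; tauto
    have hcard' : (t.erase j \ s).card = n := by
      rw [hdiff, Finset.card_erase_of_mem hj, hcard]
      omega
    have h1 := ih (t.erase j) s hsub hcard'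
    have h2 : f {j} - f ∅ ≤ f t - f (t.erase j) := by
      have := hsup ∅ (t.erase j) (Finset.empty_subset _) j
      rw [Finset.insert_erase hjt] at this
      simpa using this
    calc ∑ x ∈ t \ s, (f {x} - f ∅)
        = (f {j} - f ∅) + ∑ x ∈ (t \ s).erase j, (f {x} - f ∅) := by
          rw [← Finset.sum_erase_add (t \ s) _ hj]; ring
      _ ≤ (f t - f (t.erase j)) + (f (t.erase j) - f s) := by
          rw [hdiff] at h1; linarith
      _ = f t - f s := by ring

/-- First modular lower bound of a supermodular function:
L¹(r) = f(rt) − Σ_{j∈rt∖r} f(j | rt∖{j}) + Σ_{j∈r∖rt} f(j | ∅) ≤ f(r),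
with equality when r = rt. -/
theorem supermodular_lower_bound_one {ι : Type*} [DecidableEq ι]
    (f : Finset ι → ℝ)
    (hsup : ∀ (s t : Finset ι), s ⊆ t → ∀ j : ι,
      f (insert j s) - f s ≤ f (insert j t) - f t)
    (rt : Finset ι) :
    (∀ r : Finset ι,
      f rt - (∑ j ∈ rt \ r, (f (insert j (rt.erase j)) - f (rt.erase j)))
        + (∑ j ∈ r \ rt, (f {j} - f ∅)) ≤ f r) ∧
    (f rt - (∑ j ∈ rt \ rt, (f (insert j (rt.erase j)) - f (rt.erase j)))
        + (∑ j ∈ rt \ rt, (f {j} - f ∅)) = f rt) := by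
  constructor
  · intro r
    have hsum : ∑ j ∈ rt \ r, (f (insert j (rt.erase j)) - f (rt.erase j))
        = ∑ j ∈ rt \ r, (f rt - f (rt.erase j)) := by
      apply Finset.sum_congr rfl
      intro j hj
      rw [Finset.insert_erase (Finset.mem_sdiff.mp hj).1]
    have hd1 : rt \ (rt ∩ r) = rt \ r := by
      ext x; simp [Finset.mem_sdiff]
    have h1 := sup_lem1 f hsup (rt \ (rt ∩ r)).card rt (rt ∩ r)
      Finset.inter_subset_left rfl
    rw [hd1] at h1
    have hd2 : r \ (rt ∩ r) = r \ rt := by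
      ext x; simp [Finset.mem_sdiff]
    have h2 := sup_lem2 f hsup (r \ (rt ∩ r)).card r (rt ∩ r)
      Finset.inter_subset_right rfl
    rw [hd2] at h2
    rw [hsum]
    linarith
  · simp
end

section
/- For a supermodular set function f on a finite ground set Γ and any reference set r⁽ᵗ⁾ ⊆ Γ, the expression L²(r) = f(r⁽ᵗ⁾) − Σ_{j∈r⁽ᵗ⁾∖r} f(j | Γ∖{j}) + Σ_{j∈r∖r⁽ᵗ⁾} f(j | r⁽ᵗ⁾) satisfies L²(r) ≤ f(r) for all r ⊆ Γ, with equality at r = r⁽ᵗ⁾. -/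
lemma smod_add {ι : Type*} [DecidableEq ι]
    (f : Finset ι → ℝ)
    (hsup : ∀ (s t : Finset ι), s ⊆ t → ∀ j : ι,
      f (insert j s) - f s ≤ f (insert j t) - f t) :
    ∀ (s b : Finset ι), f b + (∑ j ∈ s, (f (insert j b) - f b)) ≤ f (s ∪ b) := by
  intro s
  induction s using Finset.induction_on with
  | empty => intro b; simp
  | @insert a s ha ih =>
    intro b
    rw [Finset.sum_insert ha, Finset.insert_union]
    have h1 := ih b
    have h2 := hsup b (s ∪ b) (Finset.subset_union_right) a
    linarith

lemma smod_remove {ι : Type*} [Fintype ι] [DecidableEq ι]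
    (f : Finset ι → ℝ)
    (hsup : ∀ (s t : Finset ι), s ⊆ t → ∀ j : ι,
      f (insert j s) - f s ≤ f (insert j t) - f t) :
    ∀ (s t : Finset ι), s ⊆ t →
      f t - f (t \ s) ≤ ∑ j ∈ s, (f (insert j (Finset.univ.erase j)) - f (Finset.univ.erase j)) := by
  intro s
  induction s using Finset.induction_on with
  | empty => intro t _; simp
  | @insert a s ha ih =>
    intro t hst
    have hat : a ∈ t := hst (Finset.mem_insert_self a s)
    have hst' : s ⊆ t := fun x hx => hst (Finset.mem_insert_of_mem hx)
    have hats : a ∈ t \ s := Finset.mem_sdiff.mpr ⟨hat, ha⟩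
    rw [Finset.sum_insert ha]
    have key : t \ insert a s = (t \ s).erase a := by
      ext x
      simp [Finset.mem_sdiff, Finset.mem_erase, Finset.mem_insert]
      tauto
    have hsub : (t \ s).erase a ⊆ Finset.univ.erase a :=
      Finset.erase_subset_erase a (Finset.subset_univ _)
    have h2 := hsup ((t \ s).erase a) (Finset.univ.erase a) hsub a
    rw [Finset.insert_erase hats] at h2
    have h1 := ih t hst'
    rw [key]
    linarith

/-- Second modular lower bound of a supermodular function:
L²(r) = f(rt) − Σ_{j∈rt∖r} f(j | Γ∖{j}) + Σ_{j∈r∖rt} f(j | rt) ≤ f(r),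
with equality when r = rt. -/
theorem supermodular_lower_bound_two {ι : Type*} [Fintype ι] [DecidableEq ι]
    (f : Finset ι → ℝ)
    (hsup : ∀ (s t : Finset ι), s ⊆ t → ∀ j : ι,
      f (insert j s) - f s ≤ f (insert j t) - f t)
    (rt : Finset ι) :
    (∀ r : Finset ι,
      f rt - (∑ j ∈ rt \ r, (f (insert j (Finset.univ.erase j)) - f (Finset.univ.erase j)))
        + (∑ j ∈ r \ rt, (f (insert j rt) - f rt)) ≤ f r) ∧
    (f rt - (∑ j ∈ rt \ rt, (f (insert j (Finset.univ.erase j)) - f (Finset.univ.erase j)))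
        + (∑ j ∈ rt \ rt, (f (insert j rt) - f rt)) = f rt) := by
  constructor
  · intro r
    have hA := smod_add f hsup (r \ rt) rt
    rw [Finset.sdiff_union_self_eq_union] at hA
    have hB := smod_remove f hsup (rt \ r) (r ∪ rt)
      (Finset.sdiff_subset.trans Finset.subset_union_right)
    have hkey : (r ∪ rt) \ (rt \ r) = r := by
      ext x
      simp [Finset.mem_sdiff, Finset.mem_union]
      tauto
    rw [hkey] at hB
    linarith
  · simp
end
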